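/- Let T be an observation tree for a Mealy machine M, with basis S and frontier F, where the relation ≈ on Q^M has n equivalence classes and |I| = k. Then the norm satisfies N(T) ≤ n(n+1)/2 + kn + (n−1)(kn+1); in particular N(T) ∈ O(k n²). -/

import Mathlib

open scoped Classical

/-- A Mealy machine over input alphabet `I` and output alphabet `O`, with state
type `Q`, initial state `q0`, and a partial combined output/transition map
`trans : Q × I ⇀ O × Q` (so the output and transition functions are defined on
exactly the same pairs). -/
structure Mealy (Q I O : Type) where
  q0 : Q
  trans : Q → I → Option (O × Q)

namespace Mealy

variable {Q Q' I O : Type}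

/-- Extension of the combined output/transition map to input words. -/
def stepStar (M : Mealy Q I O) : Q → List I → Option (List O × Q)
  | q, [] => some ([], q)
  | q, i :: σ => (M.trans q i).bind fun p =>
      (stepStar M p.2 σ).map fun r => (p.1 :: r.1, r.2)

/-- `λ(q, σ)`: the output word produced from `q` on input word `σ` (if defined);
this is also the semantics `⟦q⟧ : I* ⇀ O*` of the state `q`. -/
def outStar (M : Mealy Q I O) (q : Q) (σ : List I) : Option (List O) :=
  (M.stepStar q σ).map Prod.fst

/-- `δ(q, σ)`: the state reached from `q` on input word `σ` (if defined). -/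
def delStar (M : Mealy Q I O) (q : Q) (σ : List I) : Option Q :=
  (M.stepStar q σ).map Prod.snd

/-- `σ ⊢ q # p`: the word `σ` witnesses apartness of `q` and `p`. -/
def ApartW (M : Mealy Q I O) (σ : List I) (q p : Q) : Prop :=
  (M.outStar q σ).isSome ∧ (M.outStar p σ).isSome ∧ M.outStar q σ ≠ M.outStar p σ

/-- `q # p`: states `q` and `p` are apart. -/
def Apart (M : Mealy Q I O) (q p : Q) : Prop := ∃ σ, M.ApartW σ q p

/-- `q ≈ r`: states `q` (of `M`) and `r` (of `N`) are equivalent, i.e. have equal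
semantics `⟦q⟧ = ⟦r⟧` as partial maps `I* ⇀ O*`. -/
def StateEquiv (M : Mealy Q I O) (N : Mealy Q' I O) (q : Q) (r : Q') : Prop :=
  ∀ σ, M.outStar q σ = N.outStar r σ

/-- A functional simulation `f : M → N`. -/
def FunSim (M : Mealy Q I O) (N : Mealy Q' I O) (f : Q → Q') : Prop :=
  f M.q0 = N.q0 ∧
    ∀ q i o q'', M.trans q i = some (o, q'') → N.trans (f q) i = some (o, f q'')

/-- A Mealy machine is complete if its transition map is total. -/
def Complete (M : Mealy Q I O) : Prop := ∀ q i, (M.trans q i).isSome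

/-- A Mealy machine is a tree if every state is reached from the root by a
unique input word (its access sequence). -/
def IsTree (M : Mealy Q I O) : Prop :=
  ∀ q : Q, ∃! σ : List I, M.delStar M.q0 σ = some q

/-- `S` is a basis of the observation tree `T`: a subtree containing the root
whose states are pairwise apart. -/
structure IsBasis (T : Mealy Q I O) (S : Set Q) : Prop where
  root_mem : T.q0 ∈ S
  subtree_closed : ∀ q i o q', T.trans q i = some (o, q') → q' ∈ S → q ∈ S
  pairwise_apart : ∀ p ∈ S, ∀ q ∈ S, p ≠ q → T.Apart p q

/-- The frontier `F`: immediate non-basis successors of basis states. -/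
def frontier (T : Mealy Q I O) (S : Set Q) : Set Q :=
  {q' | q' ∉ S ∧ ∃ q ∈ S, ∃ i o, T.trans q i = some (o, q')}

/-- The basis `S` is complete: each basis state has a transition for each input. -/
def BasisComplete (T : Mealy Q I O) (S : Set Q) : Prop :=
  ∀ q ∈ S, ∀ i : I, (T.trans q i).isSome

/-- A Mealy machine `H` with state set `S` contains the basis `S` of `T`:
`δ^H(q0^H, access(q)) = q` for every `q ∈ S`. -/
def ContainsBasis (T : Mealy Q I O) (S : Set Q) (H : Mealy ↥S I O) : Prop :=
  ∀ (q : ↥S) (σ : List I), T.delStar T.q0 σ = some (q : Q) → H.delStar H.q0 σ = some q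

/-- `H` is a hypothesis for the observation tree `T` with basis `S`. -/
def IsHypothesis (T : Mealy Q I O) (S : Set Q) (H : Mealy ↥S I O) : Prop :=
  H.Complete ∧ ContainsBasis T S H ∧
    ∀ (q : ↥S) (i : I) (o' : O) (p' : ↥S), H.trans q i = some (o', p') →
      ∀ (o : O) (p : Q), T.trans (q : Q) i = some (o, p) → o = o' ∧ ¬ T.Apart p (p' : Q)

/-- The equivalence `≈` on the states of a single machine, as a setoid. -/
def equivSetoid (M : Mealy Q I O) : Setoid Q :=
  ⟨fun q r => M.StateEquiv M q r,
   ⟨fun _ _ => rfl, fun h σ => (h σ).symm, fun h1 h2 σ => (h1 σ).trans (h2 σ)⟩⟩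

/-- `R` is a bisimulation between `M` and `N`. -/
def IsBisimulation (M : Mealy Q I O) (N : Mealy Q' I O) (R : Q → Q' → Prop) : Prop :=
  R M.q0 N.q0 ∧
    ∀ q r, R q r → ∀ i o q', M.trans q i = some (o, q') →
      ∃ r', N.trans r i = some (o, r') ∧ R q' r'

end Mealy

section Aux

variable {Q Q' I O : Type}

lemma sim_stepStar {M : Mealy Q I O} {N : Mealy Q' I O} {f : Q → Q'}
    (h : M.FunSim N f) : ∀ (σ : List I) (q : Q) (w : List O) (q' : Q),
    M.stepStar q σ = some (w, q') → N.stepStar (f q) σ = some (w, f q')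
  | [], q, w, q' => by
      simp only [Mealy.stepStar, Option.some_inj, Prod.mk.injEq]
      rintro ⟨rfl, rfl⟩; exact ⟨rfl, rfl⟩
  | i :: σ, q, w, q' => by
      simp only [Mealy.stepStar, Option.bind_eq_some_iff, Option.map_eq_some_iff]
      rintro ⟨⟨o, p⟩, hqp, ⟨wr, qr⟩, hr, heq⟩
      obtain ⟨h1, h2⟩ : o :: wr = w ∧ qr = q' := by simpa using heq
      subst h1; subst h2
      exact ⟨(o, f p), h.2 q i o p hqp, (wr, f qr), sim_stepStar h σ p wr qr hr, rfl⟩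

lemma sim_outStar {M : Mealy Q I O} {N : Mealy Q' I O} {f : Q → Q'}
    (h : M.FunSim N f) {σ : List I} {q : Q} {w : List O}
    (hw : M.outStar q σ = some w) : N.outStar (f q) σ = some w := by
  unfold Mealy.outStar at hw ⊢
  rcases Option.map_eq_some_iff.1 hw with ⟨⟨w', q'⟩, hs, rfl⟩
  rw [sim_stepStar h σ q w' q' hs]; rfl

lemma apart_map {M : Mealy Q I O} {N : Mealy Q' I O} {f : Q → Q'}
    (h : M.FunSim N f) {q p : Q} (hqp : M.Apart q p) : N.Apart (f q) (f p) := by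
  obtain ⟨σ, h1, h2, h3⟩ := hqp
  obtain ⟨w1, hw1⟩ := Option.isSome_iff_exists.1 h1
  obtain ⟨w2, hw2⟩ := Option.isSome_iff_exists.1 h2
  refine ⟨σ, ?_, ?_, ?_⟩
  · rw [sim_outStar h hw1]; rfl
  · rw [sim_outStar h hw2]; rfl
  · rw [sim_outStar h hw1, sim_outStar h hw2]
    intro he; apply h3; rw [hw1, hw2, Option.some_inj.1 he]

lemma apart_not_equiv {M : Mealy Q I O} {q p : Q} (h : M.Apart q p) :
    ¬ M.StateEquiv M q p := by
  rintro he
  obtain ⟨σ, _, _, h3⟩ := h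
  exact h3 (he σ)

end Aux


/-- For an observation tree `T` for `M` with basis `S` and
frontier `F`, where `≈` on `Q^M` has `n` classes and `|I| = k`, the norm
`N(T) = |S|(|S|+1)/2 + |{(q,i) ∈ S×I : δ^T(q,i)↓}| + |{(q,q') ∈ S×F : q # q'}|`
satisfies `N(T) ≤ n(n+1)/2 + kn + (n−1)(kn+1)`. -/
theorem statement_8 {QT QM I O : Type} [Fintype I] [Fintype QT] [Fintype QM]
    (T : Mealy QT I O) (M : Mealy QM I O) (htree : T.IsTree)
    (f : QT → QM) (hf : T.FunSim M f)
    (S : Set QT) (hS : T.IsBasis S)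
    (n k : ℕ) (hn : n = Nat.card (Quotient M.equivSetoid)) (hk : k = Nat.card I) :
    S.ncard * (S.ncard + 1) / 2
        + {p : QT × I | p.1 ∈ S ∧ (T.trans p.1 p.2).isSome}.ncard
        + {p : QT × QT | p.1 ∈ S ∧ p.2 ∈ T.frontier S ∧ T.Apart p.1 p.2}.ncard
      ≤ n * (n + 1) / 2 + k * n + (n - 1) * (k * n + 1) := by
  classical
  set Qc := Quotient M.equivSetoid with hQc
  haveI : Fintype Qc := Fintype.ofFinite Qc
  set g : QT → Qc := fun q => Quotient.mk _ (f q) with hg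
  have hinj : Set.InjOn g S := by
    intro p hp q hq hpq
    by_contra hne
    exact apart_not_equiv (apart_map hf (hS.pairwise_apart p hp q hq hne))
      (Quotient.exact hpq)
  -- |S| ≤ n
  have hScard : S.ncard ≤ n := by
    rw [hn]
    calc S.ncard ≤ (Set.univ : Set Qc).ncard :=
          Set.ncard_le_ncard_of_injOn g (fun a _ => Set.mem_univ _) hinj Set.finite_univ
      _ = Nat.card Qc := Set.ncard_univ _
  -- second set
  have h2 : {p : QT × I | p.1 ∈ S ∧ (T.trans p.1 p.2).isSome}.ncard ≤ k * n := by
    have := Set.ncard_le_ncard_of_injOn (s := {p : QT × I | p.1 ∈ S ∧ (T.trans p.1 p.2).isSome})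
      (t := (Set.univ : Set (Qc × I))) (fun p => (g p.1, p.2))
      (fun a _ => Set.mem_univ _)
      (by
        rintro ⟨a1, a2⟩ ha ⟨b1, b2⟩ hb he
        simp only [Prod.mk.injEq] at he
        exact Prod.ext (hinj ha.1 hb.1 he.1) he.2)
      Set.finite_univ
    rw [Set.ncard_univ, Nat.card_prod, ← hn, ← hk, Nat.mul_comm] at this
    exact this
  -- frontier bound
  have hF : (T.frontier S).ncard ≤ k * n := by
    rcases Set.eq_empty_or_nonempty (T.frontier S) with he | ⟨q0', hq0'⟩
    · simp [he]
    · obtain ⟨-, -, -, i0, -, -⟩ := hq0'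
      have hch : ∀ q' : QT, ∃ p : QT × I,
          q' ∈ T.frontier S → (p.1 ∈ S ∧ ∃ o, T.trans p.1 p.2 = some (o, q')) := by
        intro q'
        by_cases h : q' ∈ T.frontier S
        · obtain ⟨-, q, hq, i, o, ht⟩ := h
          exact ⟨(q, i), fun _ => ⟨hq, o, ht⟩⟩
        · exact ⟨(q', i0), fun hc => absurd hc h⟩
      choose pre hpre using hch
      refine le_trans (Set.ncard_le_ncard_of_injOn
        (fun q' => ((g (pre q').1, (pre q').2) : Qc × I))
        (fun a _ => Set.mem_univ _) ?_ Set.finite_univ) ?_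
      · rintro a ha b hb he
        simp only [Prod.mk.injEq] at he
        obtain ⟨ha1, oa, hta⟩ := hpre a ha
        obtain ⟨hb1, ob, htb⟩ := hpre b hb
        have h1 : (pre a).1 = (pre b).1 := hinj ha1 hb1 he.1
        rw [h1, he.2, htb] at hta
        exact (Prod.mk.injEq _ _ _ _ ▸ Option.some_inj.1 hta).2.symm
      · rw [Set.ncard_univ, Nat.card_prod, ← hn, ← hk, Nat.mul_comm]
  -- third set
  set P : Set (QT × QT) := {p : QT × QT | p.1 ∈ S ∧ p.2 ∈ T.frontier S ∧ T.Apart p.1 p.2}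
    with hP
  have h3 : P.ncard ≤ (n - 1) * (k * n + 1) := by
    have hfib : ∀ q' ∈ (T.frontier S).toFinset,
        (P.toFinset.filter (fun a => a.2 = q')).card ≤ n - 1 := by
      intro q' _
      have := Finset.card_le_card_of_injOn (fun a => g a.1)
        (t := Finset.univ.erase (g q'))
        (s := P.toFinset.filter (fun a => a.2 = q'))
        (by
          rintro ⟨a1, a2⟩ ha
          simp only [Finset.mem_coe, Finset.mem_filter, Set.mem_toFinset, hP, Set.mem_setOf_eq] at ha
          obtain ⟨⟨h1, h2, h3⟩, rfl⟩ := ha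
          refine Finset.mem_erase.2 ⟨?_, Finset.mem_univ _⟩
          intro hc
          exact apart_not_equiv (apart_map hf h3) (Quotient.exact hc))
        (by
          rintro ⟨a1, a2⟩ ha ⟨b1, b2⟩ hb he
          simp only [Finset.coe_filter, Set.mem_toFinset, hP,
            Set.mem_setOf_eq, Set.mem_setOf_eq] at ha hb
          obtain ⟨⟨ha1, -, -⟩, rfl⟩ := ha
          obtain ⟨⟨hb1, -, -⟩, rfl⟩ := hb
          exact Prod.ext (hinj ha1 hb1 he) rfl)
      refine le_trans this ?_
      rw [Finset.card_erase_of_mem (Finset.mem_univ _), Finset.card_univ,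
        ← Nat.card_eq_fintype_card, ← hn]
    have hmain : P.toFinset.card ≤ (n - 1) * (T.frontier S).toFinset.card :=
      Finset.card_le_mul_card_image_of_maps_to
        (f := Prod.snd)
        (by
          rintro ⟨a1, a2⟩ ha
          simp only [Set.mem_toFinset, hP, Set.mem_setOf_eq] at ha ⊢
          exact ha.2.1)
        (n - 1) hfib
    calc P.ncard = P.toFinset.card := Set.ncard_eq_toFinset_card' P
      _ ≤ (n - 1) * (T.frontier S).toFinset.card := hmain
      _ = (n - 1) * (T.frontier S).ncard := by
          rw [Set.ncard_eq_toFinset_card']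
      _ ≤ (n - 1) * (k * n + 1) := Nat.mul_le_mul_left _ (le_trans hF (Nat.le_succ _))
  -- first term
  have h1 : S.ncard * (S.ncard + 1) / 2 ≤ n * (n + 1) / 2 :=
    Nat.div_le_div_right (Nat.mul_le_mul hScard (by omega))
  exact add_le_add (add_le_add h1 h2) h3
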